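/- Define expectations in the mixed state T = Σ_m |c_m|² |φ_m⟩⟨φ_m| ⊗ |φ'_m⟩⟨φ'_m| by ⟨A⟩_T = Σ_m |c_m|² ⟨φ_m⊗φ'_m, A(φ_m⊗φ'_m)⟩ for bounded operators A on H⊗H'. Then for k ≠ l and α, β ∈ ℝ: ⟨P_{αkl}⊗1⟩_T = ⟨1⊗P'_{βkl}⟩_T = 0, ⟨P_{αkl}²⊗1⟩_T = ⟨1⊗P'_{βkl}²⟩_T = |c_k|² + |c_l|², and ⟨P_{αkl}⊗P'_{βkl}⟩_T = 0; hence the normalized correlation of P_{αkl} and P'_{βkl} in T vanishes whenever |c_k|² + |c_l|² > 0. On the other hand, ⟨P_k⊗1⟩_T = ⟨1⊗P'_k⟩_T = ⟨P_k⊗P'_k⟩_T = |c_k|², so ρ(P_k, P'_k, T) = 1 whenever 0 < |c_k| < 1. Thus passing from Φ to T preserves the correlations between P_k and P'_k but erases all correlations between P_{αkl} and P'_{βkl}. -/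

import Mathlib

/- STATEMENT 14.  In the mixed state T = Σ_m |c_m|² |φ_m⟩⟨φ_m| ⊗ |φ'_m⟩⟨φ'_m|,
with ⟨A⟩_T = Σ_m |c_m|² ⟨φ_m⊗φ'_m, A(φ_m⊗φ'_m)⟩: for k ≠ l,
⟨P_{αkl}⊗1⟩_T = ⟨1⊗P'_{βkl}⟩_T = 0, ⟨P_{αkl}²⊗1⟩_T = ⟨1⊗P'_{βkl}²⟩_T =
|c_k|²+|c_l|², ⟨P_{αkl}⊗P'_{βkl}⟩_T = 0, so ρ(P_{αkl},P'_{βkl},T) = 0 whenever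
|c_k|²+|c_l|² > 0; while ⟨P_k⊗1⟩_T = ⟨1⊗P'_k⟩_T = ⟨P_k⊗P'_k⟩_T = |c_k|², so
ρ(P_k,P'_k,T) = 1 whenever 0 < |c_k| < 1.  Passing from Φ to T preserves the
P_k–P'_k correlations but erases the P_{αkl}–P'_{βkl} correlations.
`HT` plays the role of the completed Hilbert tensor product `H ⊗ H'`;
`TOp O O'` is the operator `O ⊗ O'`. -/

open scoped InnerProductSpace ComplexConjugate

/-- |u⟩⟨v| : x ↦ ⟨v, x⟩ • u. -/
noncomputable def ketBra {E : Type*} [NormedAddCommGroup E] [InnerProductSpace ℂ E]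
    (u v : E) : E →L[ℂ] E :=
  ((innerSL ℂ) v).smulRight u

/-- P_{αkl} = e^{iα}|u⟩⟨v| + e^{−iα}|v⟩⟨u|. -/
noncomputable def offDiag {E : Type*} [NormedAddCommGroup E] [InnerProductSpace ℂ E]
    (α : ℝ) (u v : E) : E →L[ℂ] E :=
  Complex.exp (α * Complex.I) • ketBra u v + Complex.exp (-(α * Complex.I)) • ketBra v u

/-- Expectation ⟨A⟩_T = Σ_m |c_m|² ⟨u_m ⊗ u'_m, A (u_m ⊗ u'_m)⟩ in the mixed
state T = Σ_m |c_m|² |u_m⟩⟨u_m| ⊗ |u'_m⟩⟨u'_m|. -/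
noncomputable def expecT {H H' HT : Type*}
    [NormedAddCommGroup H] [InnerProductSpace ℂ H]
    [NormedAddCommGroup H'] [InnerProductSpace ℂ H']
    [NormedAddCommGroup HT] [InnerProductSpace ℂ HT]
    {ι : Type*} (tp : H →ₗ[ℂ] H' →ₗ[ℂ] HT) (u : ι → H) (u' : ι → H')
    (c : ι → ℂ) (A : HT →L[ℂ] HT) : ℂ :=
  ∑' m : ι, ((‖c m‖ ^ 2 : ℝ) : ℂ) * ⟪tp (u m) (u' m), A (tp (u m) (u' m))⟫_ℂ

/-- Variance Δ_T A = √(⟨A²⟩_T − ⟨A⟩_T²) in the mixed state T. -/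
noncomputable def DeltaT {H H' HT : Type*}
    [NormedAddCommGroup H] [InnerProductSpace ℂ H]
    [NormedAddCommGroup H'] [InnerProductSpace ℂ H']
    [NormedAddCommGroup HT] [InnerProductSpace ℂ HT]
    {ι : Type*} (tp : H →ₗ[ℂ] H' →ₗ[ℂ] HT) (u : ι → H) (u' : ι → H')
    (c : ι → ℂ) (A : HT →L[ℂ] HT) : ℝ :=
  Real.sqrt ((expecT tp u u' c (A.comp A)).re - ((expecT tp u u' c A).re) ^ 2)

/-- Normalized correlation in T of A = O⊗1 and B = 1⊗O', with C = O⊗O'. -/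
noncomputable def corrT {H H' HT : Type*}
    [NormedAddCommGroup H] [InnerProductSpace ℂ H]
    [NormedAddCommGroup H'] [InnerProductSpace ℂ H']
    [NormedAddCommGroup HT] [InnerProductSpace ℂ HT]
    {ι : Type*} (tp : H →ₗ[ℂ] H' →ₗ[ℂ] HT) (u : ι → H) (u' : ι → H')
    (c : ι → ℂ) (A B C : HT →L[ℂ] HT) : ℝ :=
  ((expecT tp u u' c C).re - (expecT tp u u' c A).re * (expecT tp u u' c B).re)
    / (DeltaT tp u u' c A * DeltaT tp u u' c B)

set_option maxHeartbeats 1600000 in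
theorem mixed_state_erases_offdiagonal_correlations
    {H H' HT : Type*}
    [NormedAddCommGroup H] [InnerProductSpace ℂ H] [CompleteSpace H]
    [NormedAddCommGroup H'] [InnerProductSpace ℂ H'] [CompleteSpace H']
    [NormedAddCommGroup HT] [InnerProductSpace ℂ HT] [CompleteSpace HT]
    {ι : Type*} [Countable ι]
    (B : HilbertBasis ι ℂ H) (B' : HilbertBasis ι ℂ H')
    (tp : H →ₗ[ℂ] H' →ₗ[ℂ] HT)
    (htp : ∀ (x x' : H) (y y' : H'),
      ⟪tp x y, tp x' y'⟫_ℂ = ⟪x, x'⟫_ℂ * ⟪y, y'⟫_ℂ)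
    (hdense : Dense ((Submodule.span ℂ
      (Set.range fun p : H × H' => tp p.1 p.2) : Submodule ℂ HT) : Set HT))
    -- TOp O O' = O ⊗ O'
    (TOp : (H →L[ℂ] H) → (H' →L[ℂ] H') → (HT →L[ℂ] HT))
    (hTOp : ∀ (O : H →L[ℂ] H) (O' : H' →L[ℂ] H') (x : H) (y : H'),
      TOp O O' (tp x y) = tp (O x) (O' y))
    (c : ι → ℂ) (hc : HasSum (fun k => ‖c k‖ ^ 2) 1) :
    (∀ (k l : ι), k ≠ l → ∀ (α β : ℝ),
      expecT tp (⇑B) (⇑B') c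
        (TOp (offDiag α (B k) (B l)) (ContinuousLinearMap.id ℂ H')) = 0 ∧
      expecT tp (⇑B) (⇑B') c
        (TOp (ContinuousLinearMap.id ℂ H) (offDiag β (B' k) (B' l))) = 0 ∧
      expecT tp (⇑B) (⇑B') c
        (TOp ((offDiag α (B k) (B l)).comp (offDiag α (B k) (B l)))
          (ContinuousLinearMap.id ℂ H'))
        = ((‖c k‖ ^ 2 + ‖c l‖ ^ 2 : ℝ) : ℂ) ∧
      expecT tp (⇑B) (⇑B') c
        (TOp (ContinuousLinearMap.id ℂ H)
          ((offDiag β (B' k) (B' l)).comp (offDiag β (B' k) (B' l))))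
        = ((‖c k‖ ^ 2 + ‖c l‖ ^ 2 : ℝ) : ℂ) ∧
      expecT tp (⇑B) (⇑B') c
        (TOp (offDiag α (B k) (B l)) (offDiag β (B' k) (B' l))) = 0 ∧
      (0 < ‖c k‖ ^ 2 + ‖c l‖ ^ 2 →
        corrT tp (⇑B) (⇑B') c
          (TOp (offDiag α (B k) (B l)) (ContinuousLinearMap.id ℂ H'))
          (TOp (ContinuousLinearMap.id ℂ H) (offDiag β (B' k) (B' l)))
          (TOp (offDiag α (B k) (B l)) (offDiag β (B' k) (B' l))) = 0)) ∧
    (∀ k : ι,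
      expecT tp (⇑B) (⇑B') c
        (TOp (ketBra (B k) (B k)) (ContinuousLinearMap.id ℂ H'))
        = ((‖c k‖ ^ 2 : ℝ) : ℂ) ∧
      expecT tp (⇑B) (⇑B') c
        (TOp (ContinuousLinearMap.id ℂ H) (ketBra (B' k) (B' k)))
        = ((‖c k‖ ^ 2 : ℝ) : ℂ) ∧
      expecT tp (⇑B) (⇑B') c
        (TOp (ketBra (B k) (B k)) (ketBra (B' k) (B' k)))
        = ((‖c k‖ ^ 2 : ℝ) : ℂ) ∧
      (0 < ‖c k‖ → ‖c k‖ < 1 →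
        corrT tp (⇑B) (⇑B') c
          (TOp (ketBra (B k) (B k)) (ContinuousLinearMap.id ℂ H'))
          (TOp (ContinuousLinearMap.id ℂ H) (ketBra (B' k) (B' k)))
          (TOp (ketBra (B k) (B k)) (ketBra (B' k) (B' k))) = 1)) := by
  classical
  have hB : ∀ i j : ι, ⟪B i, B j⟫_ℂ = if i = j then 1 else 0 :=
    orthonormal_iff_ite.mp B.orthonormal
  have hB' : ∀ i j : ι, ⟪B' i, B' j⟫_ℂ = if i = j then 1 else 0 :=
    orthonormal_iff_ite.mp B'.orthonormal
  -- generic expectation computation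
  have hexp : ∀ (A : HT →L[ℂ] HT) (f : ι → ℂ),
      (∀ m, ⟪tp (B m) (B' m), A (tp (B m) (B' m))⟫_ℂ = f m) →
      expecT tp (⇑B) (⇑B') c A = ∑' m, ((‖c m‖ ^ 2 : ℝ) : ℂ) * f m := by
    intro A f h
    unfold expecT
    exact tsum_congr fun m => by rw [h]
  have hzero : ∀ (A : HT →L[ℂ] HT),
      (∀ m, ⟪tp (B m) (B' m), A (tp (B m) (B' m))⟫_ℂ = 0) →
      expecT tp (⇑B) (⇑B') c A = 0 := by
    intro A h
    rw [hexp A (fun _ => 0) h]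
    simp
  have hsingle : ∀ (A : HT →L[ℂ] HT) (k : ι),
      (∀ m, ⟪tp (B m) (B' m), A (tp (B m) (B' m))⟫_ℂ = if m = k then 1 else 0) →
      expecT tp (⇑B) (⇑B') c A = ((‖c k‖ ^ 2 : ℝ) : ℂ) := by
    intro A k h
    rw [hexp A _ h]
    have : ∀ m : ι, ((‖c m‖ ^ 2 : ℝ) : ℂ) * (if m = k then 1 else 0)
        = if m = k then ((‖c k‖ ^ 2 : ℝ) : ℂ) else 0 := by
      intro m; split_ifs with hm <;> simp [hm]
    rw [tsum_congr this, tsum_ite_eq]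
  have hdouble : ∀ (A : HT →L[ℂ] HT) (k l : ι), k ≠ l →
      (∀ m, ⟪tp (B m) (B' m), A (tp (B m) (B' m))⟫_ℂ
        = (if m = k then 1 else 0) + (if m = l then 1 else 0)) →
      expecT tp (⇑B) (⇑B') c A = ((‖c k‖ ^ 2 + ‖c l‖ ^ 2 : ℝ) : ℂ) := by
    intro A k l hkl h
    rw [hexp A _ h]
    have hfun : ∀ m : ι, ((‖c m‖ ^ 2 : ℝ) : ℂ) * ((if m = k then 1 else 0) + (if m = l then 1 else 0))
        = (if m = k then ((‖c k‖ ^ 2 : ℝ) : ℂ) else 0) + (if m = l then ((‖c l‖ ^ 2 : ℝ) : ℂ) else 0) := by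
      intro m
      by_cases hmk : m = k <;> by_cases hml : m = l
      · exact absurd (hmk.symm.trans hml) hkl
      all_goals simp [hmk, hml, hkl, hkl.symm]
    rw [tsum_congr hfun,
      Summable.tsum_add (hasSum_ite_eq k _).summable (hasSum_ite_eq l _).summable,
      tsum_ite_eq, tsum_ite_eq]
    push_cast
    ring
  refine ⟨?_, ?_⟩
  · intro k l hkl α β
    have e1 : expecT tp (⇑B) (⇑B') c
        (TOp (offDiag α (B k) (B l)) (ContinuousLinearMap.id ℂ H')) = 0 := by
      apply hzero
      intro m
      by_cases hmk : m = k <;> by_cases hml : m = l <;>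
        first
        | exact absurd (hmk.symm.trans hml) hkl
        | (simp [offDiag, ketBra, hTOp, htp, hB, hB', hmk, hml, hkl, hkl.symm,
            inner_add_right, inner_smul_right]; done)
        | (simp [offDiag, ketBra, hTOp, htp, hB, hB', hmk, hml, Ne.symm hmk, Ne.symm hml,
            inner_add_right, inner_smul_right]; done)
    have e2 : expecT tp (⇑B) (⇑B') c
        (TOp (ContinuousLinearMap.id ℂ H) (offDiag β (B' k) (B' l))) = 0 := by
      apply hzero
      intro m
      by_cases hmk : m = k <;> by_cases hml : m = l <;>
        first
        | exact absurd (hmk.symm.trans hml) hkl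
        | (simp [offDiag, ketBra, hTOp, htp, hB, hB', hmk, hml, hkl, hkl.symm,
            inner_add_right, inner_smul_right]; done)
        | (simp [offDiag, ketBra, hTOp, htp, hB, hB', hmk, hml, Ne.symm hmk, Ne.symm hml,
            inner_add_right, inner_smul_right]; done)
    have e3 : expecT tp (⇑B) (⇑B') c
        (TOp ((offDiag α (B k) (B l)).comp (offDiag α (B k) (B l)))
          (ContinuousLinearMap.id ℂ H')) = ((‖c k‖ ^ 2 + ‖c l‖ ^ 2 : ℝ) : ℂ) := by
      apply hdouble _ k l hkl
      intro m
      by_cases hmk : m = k <;> by_cases hml : m = l <;>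
        first
        | exact absurd (hmk.symm.trans hml) hkl
        | (simp [-inner_self_eq_norm_sq_to_K, offDiag, ketBra, hTOp, htp, hB, hB', hmk, hml, hkl, hkl.symm,
            inner_add_right, inner_smul_right, ← Complex.exp_add]; done)
        | (simp [-inner_self_eq_norm_sq_to_K, offDiag, ketBra, hTOp, htp, hB, hB', hmk, hml, Ne.symm hmk, Ne.symm hml,
            inner_add_right, inner_smul_right, ← Complex.exp_add]; done)
    have e4 : expecT tp (⇑B) (⇑B') c
        (TOp (ContinuousLinearMap.id ℂ H)
          ((offDiag β (B' k) (B' l)).comp (offDiag β (B' k) (B' l))))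
        = ((‖c k‖ ^ 2 + ‖c l‖ ^ 2 : ℝ) : ℂ) := by
      apply hdouble _ k l hkl
      intro m
      by_cases hmk : m = k <;> by_cases hml : m = l <;>
        first
        | exact absurd (hmk.symm.trans hml) hkl
        | (simp [-inner_self_eq_norm_sq_to_K, offDiag, ketBra, hTOp, htp, hB, hB', hmk, hml, hkl, hkl.symm,
            inner_add_right, inner_smul_right, ← Complex.exp_add]; done)
        | (simp [-inner_self_eq_norm_sq_to_K, offDiag, ketBra, hTOp, htp, hB, hB', hmk, hml, Ne.symm hmk, Ne.symm hml,
            inner_add_right, inner_smul_right, ← Complex.exp_add]; done)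
    have e5 : expecT tp (⇑B) (⇑B') c
        (TOp (offDiag α (B k) (B l)) (offDiag β (B' k) (B' l))) = 0 := by
      apply hzero
      intro m
      by_cases hmk : m = k <;> by_cases hml : m = l <;>
        first
        | exact absurd (hmk.symm.trans hml) hkl
        | (simp [-inner_self_eq_norm_sq_to_K, offDiag, ketBra, hTOp, htp, hB, hB', hmk, hml, hkl, hkl.symm,
            inner_add_right, inner_smul_right]; done)
        | (simp [-inner_self_eq_norm_sq_to_K, offDiag, ketBra, hTOp, htp, hB, hB', hmk, hml, Ne.symm hmk, Ne.symm hml,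
            inner_add_right, inner_smul_right]; done)
    refine ⟨e1, e2, e3, e4, e5, fun _ => ?_⟩
    unfold corrT
    rw [e1, e2, e5]
    simp
  · intro k
    have d1 : expecT tp (⇑B) (⇑B') c
        (TOp (ketBra (B k) (B k)) (ContinuousLinearMap.id ℂ H'))
        = ((‖c k‖ ^ 2 : ℝ) : ℂ) := by
      apply hsingle _ k
      intro m
      by_cases hmk : m = k <;>
        first
        | (simp [-inner_self_eq_norm_sq_to_K, ketBra, hTOp, htp, hB, hB', hmk, inner_smul_right]; done)
        | (simp [-inner_self_eq_norm_sq_to_K, ketBra, hTOp, htp, hB, hB', hmk, Ne.symm hmk, inner_smul_right]; done)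
    have d2 : expecT tp (⇑B) (⇑B') c
        (TOp (ContinuousLinearMap.id ℂ H) (ketBra (B' k) (B' k)))
        = ((‖c k‖ ^ 2 : ℝ) : ℂ) := by
      apply hsingle _ k
      intro m
      by_cases hmk : m = k <;>
        first
        | (simp [-inner_self_eq_norm_sq_to_K, ketBra, hTOp, htp, hB, hB', hmk, inner_smul_right]; done)
        | (simp [-inner_self_eq_norm_sq_to_K, ketBra, hTOp, htp, hB, hB', hmk, Ne.symm hmk, inner_smul_right]; done)
    have d3 : expecT tp (⇑B) (⇑B') c
        (TOp (ketBra (B k) (B k)) (ketBra (B' k) (B' k)))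
        = ((‖c k‖ ^ 2 : ℝ) : ℂ) := by
      apply hsingle _ k
      intro m
      by_cases hmk : m = k <;>
        first
        | (simp [-inner_self_eq_norm_sq_to_K, ketBra, hTOp, htp, hB, hB', hmk, inner_smul_right]; done)
        | (simp [-inner_self_eq_norm_sq_to_K, ketBra, hTOp, htp, hB, hB', hmk, Ne.symm hmk, inner_smul_right]; done)
    have d1sq : expecT tp (⇑B) (⇑B') c
        ((TOp (ketBra (B k) (B k)) (ContinuousLinearMap.id ℂ H')).comp
          (TOp (ketBra (B k) (B k)) (ContinuousLinearMap.id ℂ H')))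
        = ((‖c k‖ ^ 2 : ℝ) : ℂ) := by
      apply hsingle _ k
      intro m
      by_cases hmk : m = k <;>
        first
        | (simp [-inner_self_eq_norm_sq_to_K, ketBra, hTOp, htp, hB, hB', hmk, inner_smul_right, map_smul]; done)
        | (simp [-inner_self_eq_norm_sq_to_K, ketBra, hTOp, htp, hB, hB', hmk, Ne.symm hmk, inner_smul_right, map_smul]; done)
    have d2sq : expecT tp (⇑B) (⇑B') c
        ((TOp (ContinuousLinearMap.id ℂ H) (ketBra (B' k) (B' k))).comp
          (TOp (ContinuousLinearMap.id ℂ H) (ketBra (B' k) (B' k))))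
        = ((‖c k‖ ^ 2 : ℝ) : ℂ) := by
      apply hsingle _ k
      intro m
      by_cases hmk : m = k <;>
        first
        | (simp [-inner_self_eq_norm_sq_to_K, ketBra, hTOp, htp, hB, hB', hmk, inner_smul_right, map_smul]; done)
        | (simp [-inner_self_eq_norm_sq_to_K, ketBra, hTOp, htp, hB, hB', hmk, Ne.symm hmk, inner_smul_right, map_smul]; done)
    refine ⟨d1, d2, d3, fun h0 h1 => ?_⟩
    have hr0 : 0 < ‖c k‖ ^ 2 := by positivity
    have hr1 : ‖c k‖ ^ 2 < 1 := pow_lt_one₀ (norm_nonneg _) h1 two_ne_zero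
    have hpos : 0 < ‖c k‖ ^ 2 - (‖c k‖ ^ 2) ^ 2 := by
      have h := mul_pos hr0 (sub_pos.mpr hr1)
      calc (0:ℝ) < ‖c k‖ ^ 2 * (1 - ‖c k‖ ^ 2) := h
      _ = ‖c k‖ ^ 2 - (‖c k‖ ^ 2) ^ 2 := by ring
    unfold corrT DeltaT
    rw [d1, d2, d3, d1sq, d2sq]
    simp only [Complex.ofReal_re]
    rw [Real.mul_self_sqrt hpos.le]
    rw [show ‖c k‖ ^ 2 - ‖c k‖ ^ 2 * ‖c k‖ ^ 2 = ‖c k‖ ^ 2 - (‖c k‖ ^ 2) ^ 2 from by ring]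
    exact div_self hpos.ne'
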